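/- arXiv:1705.11156 — 4 statements merged into one kernel-verified Lean document; each statement's English description precedes it below -/
import Mathlib

section
/- Let f : ℝ² → ℝ be a non-degenerate weighted homogeneous polynomial of type (d; w₁, w₂) with w₁ ≥ w₂. Then for every λ < (d − w₁)/w₂ there do NOT exist C > 0 and a neighborhood U of 0 with ‖∇f(x)‖ ≥ C‖x‖^λ for all x ∈ U; consequently the Łojasiewicz exponent satisfies L(f) ≥ (d − w₁)/w₂. -/
open MvPolynomial

/-- Euclidean norm of the gradient of a polynomial `f` at `x`. -/
noncomputable def gradNorm {n : ℕ} (f : MvPolynomial (Fin n) ℝ) (x : Fin n → ℝ) : ℝ :=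
  Real.sqrt (∑ i, (eval x (pderiv i f)) ^ 2)

/-- Euclidean norm on `Fin n → ℝ`. -/
noncomputable def eNorm {n : ℕ} (x : Fin n → ℝ) : ℝ :=
  Real.sqrt (∑ i, (x i) ^ 2)

/-- `f` is weighted homogeneous of type `(d; w)`: every monomial `x^α` appearing in `f`
satisfies `∑ i, α i * w i = d`. -/
def IsWeightedHomog {n : ℕ} (f : MvPolynomial (Fin n) ℝ) (w : Fin n → ℕ) (d : ℕ) : Prop :=
  ∀ α ∈ f.support, ∑ i, α i * w i = d

/-- `f` is non-degenerate (isolated singularity at the origin): in some neighborhood of `0`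
the gradient of `f` vanishes only at the origin. -/
def Nondeg {n : ℕ} (f : MvPolynomial (Fin n) ℝ) : Prop :=
  ∃ U ∈ nhds (0 : Fin n → ℝ), ∀ x ∈ U, (∀ i, eval x (pderiv i f) = 0) → x = 0

/-- The Łojasiewicz inequality `‖∇f(x)‖ ≥ C ‖x‖^lam` holds near `0` for some `C > 0`. -/
def LojIneq {n : ℕ} (f : MvPolynomial (Fin n) ℝ) (lam : ℝ) : Prop :=
  ∃ C > (0 : ℝ), ∃ U ∈ nhds (0 : Fin n → ℝ), ∀ x ∈ U, C * eNorm x ^ lam ≤ gradNorm f x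

/-- The Łojasiewicz exponent of `f`: the infimum of all `lam > 0` for which the
Łojasiewicz inequality holds near the origin. -/
noncomputable def lojExp {n : ℕ} (f : MvPolynomial (Fin n) ℝ) : ℝ :=
  sInf {lam : ℝ | 0 < lam ∧ LojIneq f lam}

/-- The weighted "radius" `ρ(x) = (∑ i |x i| ^ (2 / w i)) ^ (1/2)`. -/
noncomputable def rho {n : ℕ} (w : Fin n → ℕ) (x : Fin n → ℝ) : ℝ :=
  Real.sqrt (∑ i, |x i| ^ ((2 : ℝ) / (w i : ℝ)))

/-- The weighted norm of the gradient:
`‖grad_w f(x)‖_w = (∑ i ρ(x)^(2 wᵢ) |∂f/∂xᵢ(x)|²)^(1/2)`. -/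
noncomputable def wGradNorm {n : ℕ} (w : Fin n → ℕ) (f : MvPolynomial (Fin n) ℝ)
    (x : Fin n → ℝ) : ℝ :=
  Real.sqrt (∑ i, rho w x ^ (2 * w i) * (eval x (pderiv i f)) ^ 2)


lemma L1' {n : ℕ} (g : MvPolynomial (Fin n) ℝ) (w : Fin n → ℕ) (e : ℕ)
    (h : ∀ α ∈ g.support, ∑ i, α i * w i = e) (t : ℝ) (x : Fin n → ℝ) :
    eval (fun i => t ^ (w i) * x i) g = t ^ e * eval x g := by
  rw [eval_eq', eval_eq', Finset.mul_sum]
  refine Finset.sum_congr rfl fun α hα => ?_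
  have key : ∏ i, (t ^ w i * x i) ^ α i = t ^ (∑ i, α i * w i) * ∏ i, x i ^ α i := by
    rw [← Finset.prod_pow_eq_pow_sum, ← Finset.prod_mul_distrib]
    exact Finset.prod_congr rfl fun i _ => by rw [mul_pow, ← pow_mul, Nat.mul_comm]
  rw [key, h α hα]; ring

lemma L2' {n : ℕ} (f : MvPolynomial (Fin n) ℝ) (w : Fin n → ℕ) (d : ℕ)
    (hhom : ∀ α ∈ f.support, ∑ i, α i * w i = d) (i : Fin n) :
    ∀ β ∈ (pderiv i f).support, (∑ j, β j * w j) + w i = d := by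
  intro β hβ
  have hrep : pderiv i f = ∑ α ∈ f.support, monomial (α - Finsupp.single i 1) (coeff α f * α i) := by
    conv_lhs => rw [f.as_sum]
    rw [map_sum]
    exact Finset.sum_congr rfl fun α _ => pderiv_monomial
  rw [hrep] at hβ
  obtain ⟨α, hα, hβ'⟩ := Finset.mem_biUnion.1 (MvPolynomial.support_sum hβ)
  have hβ'' := support_monomial_subset hβ'
  have hne : (coeff α f * (α i : ℝ)) ≠ 0 := by
    intro h0
    rw [h0, monomial_zero] at hβ'
    simp at hβ'
  have hαi : 1 ≤ α i := by
    rcases Nat.eq_zero_or_pos (α i) with h0 | h1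
    · rw [h0] at hne; simp at hne
    · exact h1
  have hβeq : β = α - Finsupp.single i 1 := Finset.mem_singleton.1 hβ''
  have happ : ∀ j, β j = α j - (Finsupp.single i 1 : Fin n →₀ ℕ) j := by
    intro j; rw [hβeq]; rfl
  have hsum : (∑ j, β j * w j) + w i = ∑ j, α j * w j := by
    have key : ∀ j : Fin n, β j * w j + (if j = i then w i else 0) = α j * w j := by
      intro j
      rcases eq_or_ne j i with rfl | hji
      · rw [happ j, Finsupp.single_eq_same, if_pos rfl, Nat.sub_mul, one_mul]
        have : w j ≤ α j * w j := Nat.le_mul_of_pos_left _ hαi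
        omega
      · rw [happ j, Finsupp.single_eq_of_ne hji, if_neg hji, Nat.sub_zero, Nat.add_zero]
    calc (∑ j, β j * w j) + w i
        = ∑ j, (β j * w j + if j = i then w i else 0) := by
          rw [Finset.sum_add_distrib, Finset.sum_ite_eq' Finset.univ i fun _ => w i]
          simp
      _ = ∑ j, α j * w j := Finset.sum_congr rfl fun j _ => key j
  rw [hsum]; exact hhom α hα

lemma scaleE {n : ℕ} (f : MvPolynomial (Fin n) ℝ) (w : Fin n → ℕ) (d : ℕ)
    (hhom : ∀ α ∈ f.support, ∑ i, α i * w i = d) (i : Fin n) (t : ℝ) (x : Fin n → ℝ) :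
    eval (fun j => t ^ (w j) * x j) (pderiv i f) * t ^ (w i) = t ^ d * eval x (pderiv i f) := by
  rcases eq_or_ne (pderiv i f) 0 with h0 | h0
  · simp [h0]
  · obtain ⟨β₀, hβ₀⟩ := (MvPolynomial.support_nonempty.2 h0)
    set e := ∑ j, β₀ j * w j with he
    have hed : e + w i = d := L2' f w d hhom i β₀ hβ₀
    have hall : ∀ β ∈ (pderiv i f).support, ∑ j, β j * w j = e := by
      intro β hβ
      have := L2' f w d hhom i β hβ
      omega
    rw [L1' (pderiv i f) w e hall t x, mul_comm (t ^ e), mul_assoc, ← pow_add, ← hed]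
    ring

lemma curveTendsto {n : ℕ} (w : Fin n → ℕ) (hw : ∀ i, 0 < w i) (v : Fin n → ℝ) :
    Filter.Tendsto (fun s : ℝ => fun j => s ^ (w j) * v j) (nhdsWithin 0 (Set.Ioi 0))
      (nhds (0 : Fin n → ℝ)) := by
  rw [tendsto_pi_nhds]
  intro j
  have hc : Continuous fun s : ℝ => s ^ (w j) * v j := by continuity
  have h2 : Filter.Tendsto (fun s : ℝ => s ^ (w j) * v j) (nhdsWithin 0 (Set.Ioi 0)) (nhds ((0:ℝ) ^ (w j) * v j)) :=
    (hc.tendsto 0).mono_left (nhdsWithin_le_nhds (s := Set.Ioi 0))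
  simpa [zero_pow (hw j).ne'] using h2

-- generic facts about rho
lemma rho_continuous {n : ℕ} (w : Fin n → ℕ) : Continuous (rho w) := by
  apply Real.continuous_sqrt.comp
  apply continuous_finset_sum
  intro i _
  exact ((continuous_apply i).abs).rpow_const (fun x => Or.inr (by positivity))

lemma rho_zero {n : ℕ} (w : Fin n → ℕ) (hw : ∀ i, 0 < w i) : rho w (0 : Fin n → ℝ) = 0 := by
  have : ∀ i : Fin n, |(0:ℝ)| ^ ((2:ℝ)/(w i : ℝ)) = 0 := by
    intro i
    rw [abs_zero]
    have hwi : (0:ℝ) < (w i : ℝ) := by exact_mod_cast hw i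
    exact Real.zero_rpow (div_pos two_pos hwi).ne'
  simp only [rho, Pi.zero_apply]
  rw [Finset.sum_congr rfl fun i _ => this i]
  simp

lemma rho_sum_eq {n : ℕ} (w : Fin n → ℕ) (x : Fin n → ℝ) :
    ∑ i, |x i| ^ ((2:ℝ)/(w i : ℝ)) = (rho w x) ^ 2 := by
  rw [rho, Real.sq_sqrt]
  positivity

lemma abs_le_one_of_rho_eq_one {n : ℕ} (w : Fin n → ℕ) (hw : ∀ i, 0 < w i)
    (u : Fin n → ℝ) (hu : rho w u = 1) (j : Fin n) : |u j| ≤ 1 := by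
  have hwj : (0:ℝ) < (w j : ℝ) := by exact_mod_cast hw j
  have hexp : (0:ℝ) < (2:ℝ)/(w j : ℝ) := div_pos two_pos hwj
  have hsum : ∑ i, |u i| ^ ((2:ℝ)/(w i : ℝ)) = 1 := by
    rw [rho_sum_eq w u, hu, one_pow]
  have hterm : |u j| ^ ((2:ℝ)/(w j : ℝ)) ≤ 1 := by
    rw [← hsum]
    exact Finset.single_le_sum (f := fun i => |u i| ^ ((2:ℝ)/(w i : ℝ)))
      (fun i _ => by positivity) (Finset.mem_univ j)
  by_contra h
  push_neg at h
  have h0 : (0:ℝ) < |u j| := lt_trans one_pos h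
  rcases (Real.rpow_le_one_iff_of_pos h0).1 hterm with ⟨h1, h2⟩ | ⟨h1, h2⟩
  · linarith
  · linarith

lemma gradNorm_continuous {n : ℕ} (f : MvPolynomial (Fin n) ℝ) : Continuous (gradNorm f) := by
  apply Real.continuous_sqrt.comp
  apply continuous_finset_sum
  intro i _
  exact (MvPolynomial.continuous_eval (pderiv i f)).pow 2

lemma lojHolds (d w₁ w₂ : ℕ) (hw₂ : 0 < w₂) (hw : w₂ ≤ w₁)
    (f : MvPolynomial (Fin 2) ℝ)
    (hhom : IsWeightedHomog f ![w₁, w₂] d)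
    (hnd : Nondeg f) :
    ∃ lam0 : ℝ, 0 < lam0 ∧ LojIneq f lam0 := by
  classical
  set w : Fin 2 → ℕ := ![w₁, w₂] with hwdef
  have hwpos : ∀ i, 0 < w i := by
    intro i; fin_cases i
    · exact lt_of_lt_of_le hw₂ hw
    · exact hw₂
  have hwge : ∀ i, w₂ ≤ w i := by
    intro i; fin_cases i
    · exact hw
    · exact le_refl w₂
  set Ksph : Set (Fin 2 → ℝ) := {u | rho w u = 1} with hKsph
  -- compactness
  have hclosed : IsClosed Ksph := isClosed_eq (rho_continuous w) continuous_const
  have hbdd : Bornology.IsBounded Ksph := by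
    apply (Metric.isBounded_closedBall (x := (0 : Fin 2 → ℝ)) (r := 1)).subset
    intro u hu
    rw [Metric.mem_closedBall]
    rw [dist_pi_le_iff zero_le_one]
    intro i
    rw [Real.dist_eq, Pi.zero_apply, sub_zero]
    exact abs_le_one_of_rho_eq_one w hwpos u hu i
  have hcomp : IsCompact Ksph := Metric.isCompact_of_isClosed_isBounded hclosed hbdd
  have hKne : Ksph.Nonempty := by
    refine ⟨![0,1], ?_⟩
    show rho w ![0,1] = 1
    have hw1 : (0:ℝ) < (w 0 : ℝ) := by exact_mod_cast hwpos 0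
    have h0 : |(![0,1] : Fin 2 → ℝ) 0| = 0 := by norm_num
    have h1 : |(![0,1] : Fin 2 → ℝ) 1| = 1 := by norm_num
    rw [rho, Fin.sum_univ_two, h0, h1, Real.one_rpow,
      Real.zero_rpow (div_pos two_pos hw1).ne', zero_add, Real.sqrt_one]
  obtain ⟨z, hzK, hzmin'⟩ := hcomp.exists_isMinOn hKne (gradNorm_continuous f).continuousOn
  have hzmin : ∀ y ∈ Ksph, gradNorm f z ≤ gradNorm f y := fun y hy => hzmin' hy
  set c := gradNorm f z with hc
  have hcnn : 0 ≤ c := Real.sqrt_nonneg _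
  -- c > 0 by nondegeneracy
  have hc0 : 0 < c := by
    rcases lt_or_eq_of_le hcnn with h | h
    · exact h
    exfalso
    have hz0 : ∀ i, eval z (pderiv i f) = 0 := by
      have hsum : ∑ i, (eval z (pderiv i f)) ^ 2 = 0 := by
        have := h.symm
        rw [hc, gradNorm] at this
        have hnn : (0:ℝ) ≤ ∑ i, (eval z (pderiv i f)) ^ 2 := by positivity
        nlinarith [Real.sq_sqrt hnn, this]
      intro i
      have := (Finset.sum_eq_zero_iff_of_nonneg (fun i _ => sq_nonneg _)).1 hsum i
        (Finset.mem_univ i)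
      exact pow_eq_zero_iff (n := 2) (by norm_num) |>.1 this
    obtain ⟨U₀, hU₀, hU₀p⟩ := hnd
    have ev1 : ∀ᶠ s in nhdsWithin (0:ℝ) (Set.Ioi 0),
        (fun j => s ^ (w j) * z j) ∈ U₀ := (curveTendsto w hwpos z) hU₀
    have ev2 : ∀ᶠ s in nhdsWithin (0:ℝ) (Set.Ioi 0), 0 < s := eventually_mem_nhdsWithin
    have hne : (nhdsWithin (0:ℝ) (Set.Ioi 0)).NeBot := nhdsGT_neBot 0
    obtain ⟨s, hsU, hs0⟩ := (ev1.and ev2).exists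
    have hzero : (fun j => s ^ (w j) * z j) = (0 : Fin 2 → ℝ) := by
      apply hU₀p _ hsU
      intro i
      have hE := scaleE f w d hhom i s z
      rw [hz0 i, mul_zero] at hE
      have hpow : (s:ℝ) ^ (w i) ≠ 0 := pow_ne_zero _ hs0.ne'
      exact (mul_eq_zero.1 hE).resolve_right hpow
    have hzz : z = 0 := by
      funext j
      have := congrFun hzero j
      simp only [Pi.zero_apply] at this
      have hpow : (s:ℝ) ^ (w j) ≠ 0 := pow_ne_zero _ hs0.ne'
      exact (mul_eq_zero.1 this).resolve_left hpow
    rw [hzz] at hzK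
    have := rho_zero w hwpos
    rw [hKsph] at hzK
    simp only [Set.mem_setOf_eq] at hzK
    rw [this] at hzK
    norm_num at hzK
  -- construct the Lojasiewicz inequality
  have hw2r : (0:ℝ) < (w₂ : ℝ) := by exact_mod_cast hw₂
  set D₂ : ℝ := (d:ℝ) - (w₂:ℝ) with hD₂
  set lam0 : ℝ := max (D₂ / (w₂:ℝ)) 1 with hlam0
  have hl0 : (0:ℝ) < lam0 := lt_of_lt_of_le one_pos (le_max_right _ _)
  have hwl : D₂ ≤ (w₂:ℝ) * lam0 := by
    have h1 : D₂ / (w₂:ℝ) ≤ lam0 := le_max_left _ _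
    calc D₂ = (w₂:ℝ) * (D₂ / (w₂:ℝ)) := by field_simp
      _ ≤ (w₂:ℝ) * lam0 := by exact (mul_le_mul_iff_right₀ hw2r).2 h1
  set s2 : ℝ := Real.sqrt 2 with hs2def
  have hs2 : (0:ℝ) < s2 := Real.sqrt_pos.2 two_pos
  set C : ℝ := c / s2 ^ lam0 with hCdef
  have hs2l : (0:ℝ) < s2 ^ lam0 := Real.rpow_pos_of_pos hs2 _
  have hC0 : 0 < C := div_pos hc0 hs2l
  refine ⟨lam0, hl0, C, hC0, {x | rho w x < 1}, ?_, ?_⟩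
  · apply IsOpen.mem_nhds (isOpen_lt (rho_continuous w) continuous_const)
    show rho w 0 < 1
    rw [rho_zero w hwpos]
    norm_num
  · rintro x (hx : rho w x < 1)
    rcases eq_or_ne x 0 with rfl | hx0
    · have he0 : eNorm (0 : Fin 2 → ℝ) = 0 := by
        simp [eNorm]
      rw [he0, Real.zero_rpow hl0.ne', mul_zero]
      exact Real.sqrt_nonneg _
    · set t : ℝ := rho w x with htdef
      have ht0 : 0 < t := by
        obtain ⟨j, hj⟩ : ∃ j, x j ≠ 0 := by
          by_contra hcon
          push_neg at hcon
          exact hx0 (funext hcon)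
        have hterm : (0:ℝ) < |x j| ^ ((2:ℝ)/(w j : ℝ)) :=
          Real.rpow_pos_of_pos (abs_pos.2 hj) _
        apply Real.sqrt_pos.2
        calc (0:ℝ) < |x j| ^ ((2:ℝ)/(w j : ℝ)) := hterm
          _ ≤ ∑ i, |x i| ^ ((2:ℝ)/(w i : ℝ)) :=
            Finset.single_le_sum (f := fun i => |x i| ^ ((2:ℝ)/(w i : ℝ)))
              (fun i _ => by positivity) (Finset.mem_univ j)
      have ht1 : t < 1 := hx
      have htpow : ∀ j : Fin 2, (0:ℝ) < t ^ (w j) := fun j => pow_pos ht0 _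
      set u : Fin 2 → ℝ := fun j => x j / t ^ (w j) with hudef
      have hxu : x = fun j => t ^ (w j) * u j := by
        funext j
        rw [hudef]
        field_simp
      -- rho w u = 1
      have hu1 : rho w u = 1 := by
        have hsum : ∑ i, |u i| ^ ((2:ℝ)/(w i : ℝ)) = 1 := by
          have hterm : ∀ j : Fin 2, |u j| ^ ((2:ℝ)/(w j : ℝ))
              = |x j| ^ ((2:ℝ)/(w j : ℝ)) / t ^ 2 := by
            intro j
            have hwjr : (0:ℝ) < (w j : ℝ) := by exact_mod_cast hwpos j
            have habs : |u j| = |x j| / t ^ (w j) := by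
              rw [hudef, abs_div, abs_of_pos (htpow j)]
            rw [habs, Real.div_rpow (abs_nonneg _) (htpow j).le]
            congr 1
            rw [← Real.rpow_natCast t (w j), ← Real.rpow_mul ht0.le]
            rw [show (w j : ℝ) * ((2:ℝ)/(w j : ℝ)) = 2 by field_simp]
            rw [show ((2:ℝ)) = ((2:ℕ):ℝ) by norm_num, Real.rpow_natCast]
          rw [Finset.sum_congr rfl fun j _ => hterm j, ← Finset.sum_div,
            rho_sum_eq w x, ← htdef]
          field_simp
        rw [rho, hsum, Real.sqrt_one]
      have huK : u ∈ Ksph := hu1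
      have hcu : c ≤ gradNorm f u := hzmin u huK
      have hub : ∀ j, |u j| ≤ 1 := abs_le_one_of_rho_eq_one w hwpos u hu1
      -- gradient lower bound
      have heval : ∀ i : Fin 2, eval x (pderiv i f)
          = t ^ d * eval u (pderiv i f) / t ^ (w i) := by
        intro i
        have hE := scaleE f w d hhom i t u
        rw [eq_div_iff (htpow i).ne']
        rw [hxu]
        exact hE
      have habs2 : ∀ i : Fin 2, t ^ D₂ * |eval u (pderiv i f)| ≤ |eval x (pderiv i f)| := by
        intro i
        have hwile : (w₂ : ℝ) ≤ (w i : ℝ) := by exact_mod_cast hwge i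
        have hval : |eval x (pderiv i f)| = t ^ ((d:ℝ) - (w i:ℝ)) * |eval u (pderiv i f)| := by
          rw [heval i, abs_div, abs_mul, abs_pow, abs_pow, abs_of_pos ht0,
            Real.rpow_sub ht0, ← Real.rpow_natCast t d, ← Real.rpow_natCast t (w i)]
          ring
        rw [hval]
        have hle : t ^ D₂ ≤ t ^ ((d:ℝ) - (w i:ℝ)) :=
          Real.rpow_le_rpow_of_exponent_ge ht0 ht1.le (by rw [hD₂]; linarith)
        exact mul_le_mul_of_nonneg_right hle (abs_nonneg _)
      have htD : (0:ℝ) < t ^ D₂ := Real.rpow_pos_of_pos ht0 _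
      have hgrad : t ^ D₂ * c ≤ gradNorm f x := by
        have hstep : t ^ D₂ * gradNorm f u ≤ gradNorm f x := by
          rw [gradNorm, gradNorm, Fin.sum_univ_two, Fin.sum_univ_two]
          have key : ∀ i : Fin 2, (t ^ D₂) ^ 2 * (eval u (pderiv i f)) ^ 2
              ≤ (eval x (pderiv i f)) ^ 2 := by
            intro i
            have h1 := habs2 i
            have h2 : (t ^ D₂ * |eval u (pderiv i f)|) ^ 2 ≤ |eval x (pderiv i f)| ^ 2 :=
              pow_le_pow_left₀ (by positivity) h1 2
            calc (t ^ D₂) ^ 2 * (eval u (pderiv i f)) ^ 2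
                = (t ^ D₂ * |eval u (pderiv i f)|) ^ 2 := by
                  rw [mul_pow, sq_abs]
              _ ≤ |eval x (pderiv i f)| ^ 2 := h2
              _ = (eval x (pderiv i f)) ^ 2 := sq_abs _
          calc t ^ D₂ * Real.sqrt ((eval u (pderiv 0 f))^2 + (eval u (pderiv 1 f))^2)
              = Real.sqrt ((t ^ D₂)^2 * ((eval u (pderiv 0 f))^2 + (eval u (pderiv 1 f))^2)) := by
                rw [Real.sqrt_mul (by positivity), Real.sqrt_sq htD.le]
            _ ≤ Real.sqrt ((eval x (pderiv 0 f))^2 + (eval x (pderiv 1 f))^2) := by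
                apply Real.sqrt_le_sqrt
                have := key 0
                have := key 1
                ring_nf at *
                linarith
        calc t ^ D₂ * c ≤ t ^ D₂ * gradNorm f u :=
              mul_le_mul_of_nonneg_left hcu htD.le
          _ ≤ gradNorm f x := hstep
      -- eNorm upper bound
      have henb : eNorm x ≤ s2 * t ^ ((w₂:ℝ)) := by
        have hxj : ∀ j : Fin 2, (x j) ^ 2 ≤ (t ^ ((w₂:ℝ))) ^ 2 := by
          intro j
          have hwile : (w₂ : ℝ) ≤ (w j : ℝ) := by exact_mod_cast hwge j
          have h1 : |x j| = t ^ (w j) * |u j| := by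
            rw [hxu]
            simp only [abs_mul, abs_pow, abs_of_pos ht0]
          have h2 : |x j| ≤ t ^ ((w₂:ℝ)) := by
            rw [h1]
            calc t ^ (w j) * |u j| ≤ t ^ (w j) * 1 :=
                  mul_le_mul_of_nonneg_left (hub j) (htpow j).le
              _ = t ^ ((w j : ℝ)) := by rw [mul_one, Real.rpow_natCast]
              _ ≤ t ^ ((w₂:ℝ)) := Real.rpow_le_rpow_of_exponent_ge ht0 ht1.le hwile
          calc (x j) ^ 2 = |x j| ^ 2 := (sq_abs _).symm
            _ ≤ (t ^ ((w₂:ℝ))) ^ 2 := pow_le_pow_left₀ (abs_nonneg _) h2 2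
        rw [eNorm, Fin.sum_univ_two]
        have htw : (0:ℝ) < t ^ ((w₂:ℝ)) := Real.rpow_pos_of_pos ht0 _
        calc Real.sqrt ((x 0)^2 + (x 1)^2) ≤ Real.sqrt (2 * (t ^ ((w₂:ℝ)))^2) := by
              apply Real.sqrt_le_sqrt
              have := hxj 0
              have := hxj 1
              linarith
          _ = s2 * t ^ ((w₂:ℝ)) := by
              rw [Real.sqrt_mul (by norm_num), Real.sqrt_sq htw.le, hs2def]
      -- finish
      have hfin : eNorm x ^ lam0 ≤ s2 ^ lam0 * t ^ D₂ := by
        calc eNorm x ^ lam0 ≤ (s2 * t ^ ((w₂:ℝ))) ^ lam0 :=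
              Real.rpow_le_rpow (Real.sqrt_nonneg _) henb hl0.le
          _ = s2 ^ lam0 * (t ^ ((w₂:ℝ))) ^ lam0 :=
              Real.mul_rpow hs2.le (Real.rpow_nonneg ht0.le _)
          _ = s2 ^ lam0 * t ^ ((w₂:ℝ) * lam0) := by
              rw [← Real.rpow_mul ht0.le]
          _ ≤ s2 ^ lam0 * t ^ D₂ := by
              apply mul_le_mul_of_nonneg_left _ hs2l.le
              exact Real.rpow_le_rpow_of_exponent_ge ht0 ht1.le hwl
      calc C * eNorm x ^ lam0 ≤ C * (s2 ^ lam0 * t ^ D₂) :=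
            mul_le_mul_of_nonneg_left hfin hC0.le
        _ = c * t ^ D₂ := by
            rw [hCdef]
            field_simp
        _ = t ^ D₂ * c := by ring
        _ ≤ gradNorm f x := hgrad

lemma part1 (d w₁ w₂ : ℕ) (hw₂ : 0 < w₂) (hw : w₂ ≤ w₁)
    (f : MvPolynomial (Fin 2) ℝ)
    (hhom : IsWeightedHomog f ![w₁, w₂] d) :
    ∀ lam : ℝ, lam < ((d : ℝ) - w₁) / w₂ → ¬ LojIneq f lam := by
  intro lam hlam ⟨C, hC, U, hU, hloj⟩
  set w : Fin 2 → ℕ := ![w₁, w₂] with hwdef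
  have hw0 : w 0 = w₁ := rfl
  have hw1 : w 1 = w₂ := rfl
  have hwpos : ∀ i, 0 < w i := by
    intro i
    fin_cases i
    · exact lt_of_lt_of_le hw₂ hw
    · exact hw₂
  set v : Fin 2 → ℝ := ![0, 1] with hvdef
  set xc : ℝ → (Fin 2 → ℝ) := fun s => fun j => s ^ (w j) * v j with hxc
  set a : Fin 2 → ℝ := fun i => eval v (pderiv i f) with ha
  set K : ℝ := Real.sqrt (a 0 ^ 2 + a 1 ^ 2) with hK
  have hKnn : 0 ≤ K := Real.sqrt_nonneg _
  set D : ℝ := (d : ℝ) - (w₁ : ℝ) with hD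
  set q : ℝ := (w₂ : ℝ) * lam - D with hq
  have hqneg : q < 0 := by
    have : (w₂ : ℝ) * lam < D := by
      rw [hD]
      have h2 : (0:ℝ) < (w₂ : ℝ) := by exact_mod_cast hw₂
      calc (w₂:ℝ) * lam < (w₂:ℝ) * (((d : ℝ) - w₁) / w₂) := by
            exact (mul_lt_mul_iff_right₀ h2).2 hlam
        _ = (d : ℝ) - w₁ := by field_simp
    linarith
  -- eventually facts
  have F := nhdsWithin 0 (Set.Ioi (0:ℝ))
  have hne : (nhdsWithin (0:ℝ) (Set.Ioi 0)).NeBot := nhdsGT_neBot 0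
  have ev1 : ∀ᶠ s in nhdsWithin (0:ℝ) (Set.Ioi 0), xc s ∈ U :=
    (curveTendsto w hwpos v) hU
  have ev2 : ∀ᶠ s in nhdsWithin (0:ℝ) (Set.Ioi 0), 0 < s :=
    eventually_mem_nhdsWithin
  have ev3 : ∀ᶠ s in nhdsWithin (0:ℝ) (Set.Ioi 0), s < 1 :=
    Filter.Eventually.filter_mono nhdsWithin_le_nhds (eventually_lt_nhds zero_lt_one)
  have ev4 : ∀ᶠ s in nhdsWithin (0:ℝ) (Set.Ioi 0), K < C * s ^ q := by
    have htend : Filter.Tendsto (fun s : ℝ => s ^ q) (nhdsWithin 0 (Set.Ioi 0)) Filter.atTop := by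
      have h1 : Filter.Tendsto (fun s : ℝ => s⁻¹) (nhdsWithin 0 (Set.Ioi 0)) Filter.atTop :=
        tendsto_inv_nhdsGT_zero
      have h2 : Filter.Tendsto (fun y : ℝ => y ^ (-q)) Filter.atTop Filter.atTop :=
        tendsto_rpow_atTop (by linarith)
      have h3 := h2.comp h1
      refine h3.congr' ?_
      filter_upwards [eventually_mem_nhdsWithin] with s hs
      have hs' : (0:ℝ) < s := hs
      simp only [Function.comp]
      rw [← Real.rpow_neg_one s, ← Real.rpow_mul hs'.le]
      norm_num
    have := htend.eventually_gt_atTop (K / C)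
    filter_upwards [this] with s hs
    calc K = C * (K / C) := by field_simp
      _ < C * s ^ q := by exact (mul_lt_mul_iff_right₀ hC).2 hs
  obtain ⟨s, hsU, hs0, hs1, hsK⟩ := (ev1.and (ev2.and (ev3.and ev4))).exists
  have hsD : (0:ℝ) < s ^ D := Real.rpow_pos_of_pos hs0 D
  -- eNorm of the curve point
  have hxc0 : xc s 0 = 0 := by simp [hxc, hvdef]
  have hxc1 : xc s 1 = s ^ w₂ := by simp [hxc, hvdef, hw1]
  have hen : eNorm (xc s) = s ^ w₂ := by
    rw [eNorm, Fin.sum_univ_two, hxc0, hxc1]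
    rw [show (0:ℝ)^2 + (s ^ w₂)^2 = (s ^ w₂)^2 by ring]
    exact Real.sqrt_sq (pow_nonneg hs0.le _)
  -- pointwise gradient bound
  have habs : ∀ i : Fin 2, |eval (xc s) (pderiv i f)| ≤ |a i| * s ^ D := by
    intro i
    have hE := scaleE f w d hhom i s v
    have hpow : (0:ℝ) < s ^ (w i) := pow_pos hs0 _
    have heval : eval (xc s) (pderiv i f) = s ^ d * a i / s ^ (w i) := by
      rw [eq_div_iff hpow.ne']
      exact hE
    have hwi : (w i : ℝ) ≤ (w₁ : ℝ) := by
      have : w i ≤ w₁ := by fin_cases i <;> simp [hwdef, hw]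
      exact_mod_cast this
    have hDle : D ≤ (d:ℝ) - (w i : ℝ) := by rw [hD]; linarith
    have hval : |eval (xc s) (pderiv i f)| = s ^ ((d:ℝ) - (w i:ℝ)) * |a i| := by
      rw [heval, abs_div, abs_mul, abs_pow, abs_pow, abs_of_pos hs0]
      rw [Real.rpow_sub hs0, ← Real.rpow_natCast s d, ← Real.rpow_natCast s (w i)]
      ring
    rw [hval, mul_comm]
    have : s ^ ((d:ℝ) - (w i:ℝ)) ≤ s ^ D :=
      Real.rpow_le_rpow_of_exponent_ge hs0 hs1.le hDle
    exact mul_le_mul_of_nonneg_left this (abs_nonneg _)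
  have hgrad : gradNorm f (xc s) ≤ K * s ^ D := by
    rw [gradNorm, Fin.sum_univ_two]
    have h0 := habs 0
    have h1 := habs 1
    have hsq : ∀ i : Fin 2, (eval (xc s) (pderiv i f)) ^ 2 ≤ a i ^ 2 * (s ^ D) ^ 2 := by
      intro i
      have := sq_le_sq' (neg_le_of_abs_le ((habs i).trans (le_of_eq rfl))) (le_of_abs_le (habs i))
      calc (eval (xc s) (pderiv i f)) ^ 2 ≤ (|a i| * s ^ D) ^ 2 := by
            rw [← sq_abs]
            exact pow_le_pow_left₀ (abs_nonneg _) (habs i) 2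
        _ = a i ^ 2 * (s ^ D) ^ 2 := by rw [mul_pow, sq_abs]
    calc Real.sqrt ((eval (xc s) (pderiv 0 f))^2 + (eval (xc s) (pderiv 1 f))^2)
        ≤ Real.sqrt ((a 0 ^ 2 + a 1 ^ 2) * (s ^ D) ^ 2) := by
          apply Real.sqrt_le_sqrt
          have := hsq 0
          have := hsq 1
          ring_nf
          ring_nf at this ⊢
          nlinarith [hsq 0, hsq 1]
      _ = K * s ^ D := by
          rw [Real.sqrt_mul (by positivity), Real.sqrt_sq hsD.le, hK]
  -- the Lojasiewicz inequality at xc s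
  have hineq := hloj (xc s) hsU
  rw [hen] at hineq
  have hpowsplit : (s ^ w₂ : ℝ) ^ lam = s ^ q * s ^ D := by
    rw [← Real.rpow_natCast s w₂, ← Real.rpow_mul hs0.le, ← Real.rpow_add hs0]
    congr 1
    rw [hq]; ring
  rw [hpowsplit] at hineq
  have : C * s ^ q * s ^ D ≤ K * s ^ D := by
    calc C * s ^ q * s ^ D = C * (s ^ q * s ^ D) := by ring
      _ ≤ gradNorm f (xc s) := hineq
      _ ≤ K * s ^ D := hgrad
  have hfin : C * s ^ q ≤ K := le_of_mul_le_mul_right this hsD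
  exact absurd hfin (not_le.2 hsK)

theorem stmt6 (d w₁ w₂ : ℕ) (hd : 0 < d) (hw₂ : 0 < w₂) (hw : w₂ ≤ w₁)
    (f : MvPolynomial (Fin 2) ℝ)
    (hhom : IsWeightedHomog f ![w₁, w₂] d)
    (hnd : Nondeg f) :
    (∀ lam : ℝ, lam < ((d : ℝ) - w₁) / w₂ → ¬ LojIneq f lam) ∧
    ((d : ℝ) - w₁) / w₂ ≤ lojExp f := by
  have h1 := part1 d w₁ w₂ hw₂ hw f hhom
  refine ⟨h1, ?_⟩
  obtain ⟨lam0, hl0, hLoj⟩ := lojHolds d w₁ w₂ hw₂ hw f hhom hnd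
  rw [lojExp]
  have hmem : lam0 ∈ {lam : ℝ | 0 < lam ∧ LojIneq f lam} := ⟨hl0, hLoj⟩
  apply le_csInf ⟨lam0, hmem⟩
  rintro b ⟨hb0, hbLoj⟩
  by_contra h
  push_neg at h
  exact h1 b h hbLoj
end

section
/- Let f : ℝ² → ℝ be a weighted homogeneous polynomial of type (d; w₁, w₂) with w₁ ≥ w₂, and suppose the origin is an isolated zero of ∂f/∂x₁, i.e. there is a neighborhood of 0 in which ∂f/∂x₁ vanishes only at the origin. Then there exist C > 0 and a neighborhood U of 0 such that ‖∇f(x)‖ ≥ C‖x‖^{(d−w₁)/w₂} for all x ∈ U. -/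
open MvPolynomial

lemma eval_scale {n : ℕ} (w : Fin n → ℕ) (e : ℕ) (g : MvPolynomial (Fin n) ℝ)
    (hg : ∀ α ∈ g.support, ∑ i, α i * w i = e) (t : ℝ) (x : Fin n → ℝ) :
    eval (fun i => t ^ w i * x i) g = t ^ e * eval x g := by
  conv_lhs => rw [g.as_sum]
  conv_rhs => rw [g.as_sum]
  rw [map_sum, map_sum, Finset.mul_sum]
  refine Finset.sum_congr rfl fun α hα => ?_
  rw [eval_monomial, eval_monomial, Finsupp.prod_fintype _ _ (fun i => pow_zero _),
    Finsupp.prod_fintype _ _ (fun i => pow_zero _)]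
  have : ∏ i, (t ^ w i * x i) ^ α i = t ^ (∑ i, α i * w i) * ∏ i, x i ^ α i := by
    rw [← Finset.prod_pow_eq_pow_sum, ← Finset.prod_mul_distrib]
    exact Finset.prod_congr rfl fun i _ => by rw [mul_pow, ← pow_mul, mul_comm (w i)]
  rw [this, hg α hα]; ring

lemma pderiv_support {n : ℕ} (f : MvPolynomial (Fin n) ℝ) (j : Fin n) :
    ∀ α ∈ (pderiv j f).support, ∃ β ∈ f.support, α + Finsupp.single j 1 = β := by
  intro α hα
  rw [MvPolynomial.mem_support_iff] at hα
  have h : pderiv j f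
      = ∑ β ∈ f.support, monomial (β - Finsupp.single j 1) (coeff β f * (β j : ℝ)) := by
    conv_lhs => rw [f.as_sum]
    rw [map_sum]
    exact Finset.sum_congr rfl fun β _ => by rw [pderiv_monomial]
  rw [h, MvPolynomial.coeff_sum] at hα
  obtain ⟨β, hβ, hne⟩ := Finset.exists_ne_zero_of_sum_ne_zero hα
  rw [coeff_monomial] at hne
  split_ifs at hne with heq
  · refine ⟨β, hβ, ?_⟩
    have hβj : 1 ≤ β j := by
      rcases Nat.eq_zero_or_pos (β j) with h0 | h1
      · simp [h0] at hne
      · exact h1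
    ext i
    simp only [Finsupp.add_apply, ← heq, Finsupp.tsub_apply]
    rcases eq_or_ne i j with rfl | hij
    · simp [Nat.sub_add_cancel hβj]
    · simp [Finsupp.single_eq_of_ne' (Ne.symm hij)]
  · exact absurd rfl hne

lemma pderiv_homog {n : ℕ} (f : MvPolynomial (Fin n) ℝ) (w : Fin n → ℕ) (d : ℕ) (j : Fin n)
    (hf : ∀ α ∈ f.support, ∑ i, α i * w i = d) :
    ∀ α ∈ (pderiv j f).support, ∑ i, α i * w i + w j = d := by
  intro α hα
  obtain ⟨β, hβ, heq⟩ := pderiv_support f j α hα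
  have := hf β hβ
  rw [← heq] at this
  rw [← this]
  simp only [Finsupp.add_apply, add_mul]
  rw [Finset.sum_add_distrib]
  congr 1
  simp [Finsupp.single_apply]

theorem stmt7 (d w₁ w₂ : ℕ) (hd : 0 < d) (hw₂ : 0 < w₂) (hw : w₂ ≤ w₁)
    (f : MvPolynomial (Fin 2) ℝ)
    (hhom : IsWeightedHomog f ![w₁, w₂] d)
    (hiso : ∃ U ∈ nhds (0 : Fin 2 → ℝ), ∀ x ∈ U,
      eval x (pderiv 0 f) = 0 → x = 0) :
    ∃ C > (0 : ℝ), ∃ U ∈ nhds (0 : Fin 2 → ℝ), ∀ x ∈ U,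
      C * eNorm x ^ (((d : ℝ) - w₁) / w₂) ≤ gradNorm f x := by
  classical
  set w : Fin 2 → ℕ := ![w₁, w₂] with hwdef
  set g := pderiv (0 : Fin 2) f with hgdef
  have hw0 : w 0 = w₁ := rfl
  have hw1 : w 1 = w₂ := rfl
  have hwpos : ∀ i, 0 < w i := by
    intro i; fin_cases i <;> simp [w] <;> omega
  have hwle : ∀ i, w₂ ≤ w i := by
    intro i; fin_cases i <;> simp [w, hw]
  obtain ⟨U₀, hU₀, hU₀p⟩ := hiso
  -- g ≠ 0
  have hgne : g ≠ 0 := by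
    intro hg0
    obtain ⟨ε, hε, hball⟩ := Metric.mem_nhds_iff.mp hU₀
    set p : Fin 2 → ℝ := fun _ => ε / 2 with hp
    have hpU : p ∈ U₀ := by
      apply hball
      simp only [Metric.mem_ball, dist_zero_right]
      calc ‖p‖ = ‖(ε / 2 : ℝ)‖ := by rw [hp]; exact pi_norm_const _
        _ < ε := by rw [Real.norm_eq_abs, abs_of_pos (by linarith)]; linarith
    have h0 : p = 0 := hU₀p p hpU (by rw [hg0]; simp)
    have := congrFun h0 0
    simp [hp] at this
    linarith
  -- homogeneity of g
  have hkey : ∀ α ∈ g.support, ∑ i, α i * w i + w₁ = d := by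
    intro α hα
    have := pderiv_homog f w d 0 hhom α hα
    rwa [hw0] at this
  have hdw : w₁ ≤ d := by
    obtain ⟨α, hα⟩ := (MvPolynomial.support_nonempty).mpr hgne
    have := hkey α hα; omega
  have he : ∀ α ∈ g.support, ∑ i, α i * w i = d - w₁ := fun α hα => by
    have := hkey α hα; omega
  set e := d - w₁ with hedef
  have hscale : ∀ (t : ℝ) (x : Fin 2 → ℝ),
      eval (fun i => t ^ w i * x i) g = t ^ e * eval x g := eval_scale w e g he
  -- no zeros off origin
  have hnz : ∀ p : Fin 2 → ℝ, p ≠ 0 → eval p g ≠ 0 := by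
    intro p hp h0
    set h : ℝ → (Fin 2 → ℝ) := fun t i => t ^ w i * p i with hh
    have hcont : Continuous h := by
      apply continuous_pi
      intro i
      exact ((continuous_pow (w i)).mul continuous_const)
    have hh0 : h 0 = 0 := by
      funext i; simp [hh, zero_pow (hwpos i).ne']
    have htend : Filter.Tendsto h (nhds 0) (nhds (0 : Fin 2 → ℝ)) := by
      rw [← hh0]; exact hcont.tendsto 0
    have hpre : h ⁻¹' U₀ ∈ nhds (0 : ℝ) := htend hU₀
    obtain ⟨ε, hε, hball⟩ := Metric.mem_nhds_iff.mp hpre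
    have htU : h (ε / 2) ∈ U₀ := by
      apply hball
      simp only [Metric.mem_ball, dist_zero_right, Real.norm_eq_abs,
        abs_of_pos (by linarith : (0:ℝ) < ε / 2)]
      linarith
    have hev : eval (h (ε / 2)) g = 0 := by
      have := hscale (ε / 2) p
      rw [hh]; rw [this, h0, mul_zero]
    have := hU₀p _ htU hev
    apply hp
    funext i
    have := congrFun this i
    simp only [hh, Pi.zero_apply] at this ⊢
    have hne : (ε / 2 : ℝ) ^ w i ≠ 0 := pow_ne_zero _ (by linarith)
    exact (mul_eq_zero.mp this).resolve_left hne
  -- compact sphere minimum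
  set S : Set (Fin 2 → ℝ) := {u | ∑ i, u i ^ 2 = 1} with hS
  have hScont : Continuous fun u : Fin 2 → ℝ => ∑ i, u i ^ 2 := by
    apply continuous_finset_sum
    intro i _
    exact (continuous_apply i).pow 2
  have hSclosed : IsClosed S := isClosed_eq hScont continuous_const
  have hSbdd : Bornology.IsBounded S := by
    rw [Metric.isBounded_iff_subset_closedBall 0]
    refine ⟨1, fun u hu => ?_⟩
    simp only [Metric.mem_closedBall, dist_zero_right]
    have hsum : ∑ i, u i ^ 2 = 1 := hu
    apply pi_norm_le_iff_of_nonneg zero_le_one |>.mpr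
    intro i
    have hle : u i ^ 2 ≤ 1 := by
      rw [← hsum]
      exact Finset.single_le_sum (fun j _ => sq_nonneg (u j)) (Finset.mem_univ i)
    rw [Real.norm_eq_abs]
    nlinarith [abs_nonneg (u i), sq_abs (u i)]
  have hScomp : IsCompact S := Metric.isCompact_of_isClosed_isBounded hSclosed hSbdd
  have hSne : S.Nonempty := ⟨![1, 0], by simp [hS, Fin.sum_univ_two]⟩
  have hacont : Continuous fun x : Fin 2 → ℝ => |eval x g| :=
    (MvPolynomial.continuous_eval g).abs
  obtain ⟨u₀, hu₀S, hmin⟩ := hScomp.exists_isMinOn hSne hacont.continuousOn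
  set m := |eval u₀ g| with hm
  have hu₀ne : u₀ ≠ 0 := by
    intro h
    have : ∑ i, u₀ i ^ 2 = 1 := hu₀S
    rw [h] at this
    simp at this
  have hmpos : 0 < m := abs_pos.mpr (hnz u₀ hu₀ne)
  -- the neighborhood
  refine ⟨m, hmpos, {x | ∑ i, x i ^ 2 < 1}, ?_, ?_⟩
  · exact (isOpen_lt hScont continuous_const).mem_nhds (by simp)
  intro x hx
  have hxlt : ∑ i, x i ^ 2 < 1 := hx
  have hgrad : |eval x g| ≤ gradNorm f x := by
    rw [gradNorm, Fin.sum_univ_two]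
    calc |eval x g| = Real.sqrt ((eval x g) ^ 2) := (Real.sqrt_sq_eq_abs _).symm
      _ ≤ _ := Real.sqrt_le_sqrt (by rw [← hgdef]; nlinarith [sq_nonneg (eval x (pderiv 1 f))])
  have hlam : ((d : ℝ) - w₁) / w₂ = (e : ℝ) / w₂ := by
    rw [hedef, Nat.cast_sub hdw]
  rw [hlam]
  by_cases hx0 : x = 0
  · subst hx0
    have hE0 : eNorm (0 : Fin 2 → ℝ) = 0 := by simp [eNorm]
    rw [hE0]
    by_cases he0 : e = 0
    · have h00 : (0 : ℝ) ^ ((e : ℝ) / w₂) = 1 := by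
        rw [he0]; simp
      rw [h00, mul_one]
      have h0u : eval (0 : Fin 2 → ℝ) g = eval u₀ g := by
        have := hscale 0 u₀
        have hfun : (fun i => (0 : ℝ) ^ w i * u₀ i) = 0 := by
          funext i; simp [zero_pow (hwpos i).ne']
        rw [hfun, he0, pow_zero, one_mul] at this
        exact this
      calc m = |eval (0 : Fin 2 → ℝ) g| := by rw [hm, h0u]
        _ ≤ gradNorm f 0 := hgrad
    · have h00 : (0 : ℝ) ^ ((e : ℝ) / w₂) = 0 := by
        apply Real.zero_rpow
        apply div_ne_zero
        · exact_mod_cast he0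
        · exact_mod_cast hw₂.ne'
      rw [h00, mul_zero]
      exact Real.sqrt_nonneg _
  · -- main case
    obtain ⟨i₀, hi₀⟩ := Function.ne_iff.mp hx0
    have hi₀' : x i₀ ≠ 0 := hi₀
    set a := |x i₀| with ha
    have hapos : 0 < a := abs_pos.mpr hi₀'
    have hsumge : x i₀ ^ 2 ≤ ∑ i, x i ^ 2 :=
      Finset.single_le_sum (fun j _ => sq_nonneg (x j)) (Finset.mem_univ i₀)
    have ha1 : a ≤ 1 := by nlinarith [sq_abs (x i₀)]
    set F : ℝ → ℝ := fun t => ∑ i, (x i / t ^ w i) ^ 2 with hF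
    have hFcont : ContinuousOn F (Set.Icc a 1) := by
      apply continuousOn_finset_sum
      intro i _
      apply ContinuousOn.pow
      apply ContinuousOn.div continuousOn_const (Continuous.continuousOn (continuous_pow _))
      intro t ht
      exact pow_ne_zero _ (by have := ht.1; intro h; rw [h] at this; linarith)
    have hF1 : F 1 ≤ 1 := by
      simp only [hF, one_pow, div_one]
      exact hxlt.le
    have hFa : 1 ≤ F a := by
      have haw : a ^ w i₀ ≤ a := pow_le_of_le_one hapos.le ha1 (hwpos i₀).ne'
      have hawpos : 0 < a ^ w i₀ := pow_pos hapos _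
      have hterm : 1 ≤ (x i₀ / a ^ w i₀) ^ 2 := by
        rw [div_pow, le_div_iff₀ (by positivity)]
        calc 1 * (a ^ w i₀) ^ 2 = (a ^ w i₀) ^ 2 := one_mul _
          _ ≤ a ^ 2 := by nlinarith
          _ = x i₀ ^ 2 := by rw [ha, sq_abs]
      show (1 : ℝ) ≤ ∑ i, (x i / a ^ w i) ^ 2
      calc (1 : ℝ) ≤ (x i₀ / a ^ w i₀) ^ 2 := hterm
        _ ≤ ∑ i, (x i / a ^ w i) ^ 2 :=
          Finset.single_le_sum (f := fun i => (x i / a ^ w i) ^ 2)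
            (fun j _ => sq_nonneg _) (Finset.mem_univ i₀)
    obtain ⟨t, htmem, htF⟩ := intermediate_value_Icc' ha1 hFcont ⟨hF1, hFa⟩
    have ht0 : 0 < t := lt_of_lt_of_le hapos htmem.1
    have ht1 : t ≤ 1 := htmem.2
    set u : Fin 2 → ℝ := fun i => x i / t ^ w i with hu
    have huS : ∑ i, u i ^ 2 = 1 := htF
    have hxu : ∀ i, x i = t ^ w i * u i := by
      intro i
      rw [hu]
      field_simp
    have heval : eval x g = t ^ e * eval u g := by
      rw [show x = fun i => t ^ w i * u i from funext hxu]
      exact hscale t u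
    have hmu : m ≤ |eval u g| := hmin huS
    have hxle : ∑ i, x i ^ 2 ≤ t ^ (2 * w₂) := by
      calc ∑ i, x i ^ 2 = ∑ i, t ^ (2 * w i) * u i ^ 2 := by
            refine Finset.sum_congr rfl fun i _ => ?_
            rw [hxu i, mul_pow, ← pow_mul, mul_comm (w i) 2]
        _ ≤ ∑ i, t ^ (2 * w₂) * u i ^ 2 := by
            apply Finset.sum_le_sum
            intro i _
            apply mul_le_mul_of_nonneg_right _ (sq_nonneg _)
            exact pow_le_pow_of_le_one ht0.le ht1 (by have := hwle i; omega)
        _ = t ^ (2 * w₂) := by rw [← Finset.mul_sum, huS, mul_one]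
    have hEx : eNorm x ≤ t ^ w₂ := by
      rw [eNorm]
      calc Real.sqrt (∑ i, x i ^ 2) ≤ Real.sqrt (t ^ (2 * w₂)) := Real.sqrt_le_sqrt hxle
        _ = t ^ w₂ := by
            rw [mul_comm 2 w₂, pow_mul, Real.sqrt_sq (by positivity)]
    have hEnn : (0 : ℝ) ≤ eNorm x := Real.sqrt_nonneg _
    have h1 : eNorm x ^ ((e : ℝ) / w₂) ≤ ((t ^ w₂ : ℝ)) ^ ((e : ℝ) / w₂) :=
      Real.rpow_le_rpow hEnn hEx (by positivity)
    have h2 : ((t ^ w₂ : ℝ)) ^ ((e : ℝ) / w₂) = t ^ e := by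
      rw [← Real.rpow_natCast t w₂, ← Real.rpow_mul ht0.le]
      rw [show (w₂ : ℝ) * ((e : ℝ) / w₂) = (e : ℝ) by field_simp]
      exact Real.rpow_natCast t e
    calc m * eNorm x ^ ((e : ℝ) / w₂) ≤ m * t ^ e := by
          apply mul_le_mul_of_nonneg_left (h1.trans_eq h2) hmpos.le
      _ ≤ |eval u g| * t ^ e := mul_le_mul_of_nonneg_right hmu (by positivity)
      _ = |eval x g| := by
          rw [heval, abs_mul, abs_of_nonneg (by positivity : (0:ℝ) ≤ t ^ e)]
          ring
      _ ≤ gradNorm f x := hgrad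
end

section
/- The polynomial f(x, y) = x³ + x y⁶ + y⁹ (weighted homogeneous of type (9; 3, 1) with an isolated singularity at the origin) has Łojasiewicz exponent L(f) = 6. -/
open MvPolynomial Filter

local notation "F" => ((X 0) ^ 3 + X 0 * (X 1) ^ 6 + (X 1) ^ 9 : MvPolynomial (Fin 2) ℝ)

lemma keyineq (a b : ℝ) (ha0 : 0 ≤ a) (ha : a ≤ 1) (hb0 : 0 ≤ b) (hb : b ≤ 1) :
    (a + b)^3 ≤ 24*a + 8*b^3 := by
  nlinarith [mul_nonneg ha0 hb0, mul_nonneg (mul_nonneg ha0 hb0) hb0,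
    mul_nonneg (mul_nonneg ha0 ha0) hb0, sq_nonneg (a-b), sq_nonneg (a+b),
    mul_le_one₀ ha hb0 hb]

lemma eval_pd0 (x : Fin 2 → ℝ) : eval x (pderiv 0 F) = 3 * (x 0)^2 + (x 1)^6 := by
  simp [pderiv_X, Pi.single_apply]

lemma eval_pd1 (x : Fin 2 → ℝ) : eval x (pderiv 1 F) = 6 * (x 0) * (x 1)^5 + 9 * (x 1)^8 := by
  simp [pderiv_X, Pi.single_apply]; ring

lemma gradNorm_eval (x : Fin 2 → ℝ) :
    gradNorm F x = Real.sqrt ((3 * (x 0)^2 + (x 1)^6)^2 + (6 * (x 0) * (x 1)^5 + 9 * (x 1)^8)^2) := by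
  unfold gradNorm
  rw [Fin.sum_univ_two, eval_pd0, eval_pd1]

lemma eNorm_eval (x : Fin 2 → ℝ) : eNorm x = Real.sqrt ((x 0)^2 + (x 1)^2) := by
  unfold eNorm; rw [Fin.sum_univ_two]

lemma six_mem : LojIneq F (6 : ℝ) := by
  refine ⟨1/8, by norm_num, Metric.ball 0 1, Metric.ball_mem_nhds _ one_pos, ?_⟩
  intro x hx
  have hb : ‖x‖ < 1 := by simpa [dist_eq_norm] using hx
  have h0 : |x 0| ≤ 1 := by
    have := (norm_le_pi_norm x 0).trans hb.le
    simpa [Real.norm_eq_abs] using this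
  have h1 : |x 1| ≤ 1 := by
    have := (norm_le_pi_norm x 1).trans hb.le
    simpa [Real.norm_eq_abs] using this
  have ha : (x 0)^2 ≤ 1 := by nlinarith [abs_nonneg (x 0), sq_abs (x 0)]
  have ha1 : (x 1)^2 ≤ 1 := by nlinarith [abs_nonneg (x 1), sq_abs (x 1)]
  have hen : eNorm x ^ (6:ℝ) = ((x 0)^2 + (x 1)^2)^3 := by
    rw [eNorm_eval, show (6:ℝ) = ((6:ℕ):ℝ) by norm_num, Real.rpow_natCast]
    rw [show (Real.sqrt ((x 0)^2 + (x 1)^2))^(6:ℕ) = ((Real.sqrt ((x 0)^2 + (x 1)^2))^2)^3 by ring,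
      Real.sq_sqrt (by positivity)]
  have hgrad : 3 * (x 0)^2 + (x 1)^6 ≤ gradNorm F x := by
    rw [gradNorm_eval]
    calc 3 * (x 0)^2 + (x 1)^6 = Real.sqrt ((3 * (x 0)^2 + (x 1)^6)^2) := by
          rw [Real.sqrt_sq (by positivity)]
      _ ≤ _ := Real.sqrt_le_sqrt (by nlinarith [sq_nonneg (6 * (x 0) * (x 1)^5 + 9 * (x 1)^8)])
  rw [hen]
  have key := keyineq ((x 0)^2) ((x 1)^2) (sq_nonneg _) ha (sq_nonneg _) ha1
  have hb6 : ((x 1)^2)^3 = (x 1)^6 := by ring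
  rw [hb6] at key
  linarith

lemma lower_bd : ∀ lam ∈ {lam : ℝ | 0 < lam ∧ LojIneq F lam}, (6:ℝ) ≤ lam := by
  rintro lam ⟨hlam, C, hC, U, hU, hineq⟩
  by_contra hlt
  push_neg at hlt
  obtain ⟨ε, hε, hball⟩ := Metric.mem_nhds_iff.mp hU
  set c : ℝ → (Fin 2 → ℝ) := fun t => ![-3/2 * t^3, t] with hc
  have hkey : ∀ᶠ t in nhdsWithin 0 (Set.Ioi (0:ℝ)), C ≤ 31/4 * t ^ (6 - lam) := by
    have hmem : ∀ᶠ t in nhdsWithin 0 (Set.Ioi (0:ℝ)), t < 2/3 * min ε 1 := by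
      apply eventually_nhdsWithin_of_eventually_nhds
      exact eventually_lt_nhds (by positivity)
    filter_upwards [hmem, self_mem_nhdsWithin] with t ht htpos
    have htpos : (0:ℝ) < t := htpos
    have h1 : t < 2/3 * ε := lt_of_lt_of_le ht (by nlinarith [min_le_left ε 1])
    have h2 : t < 1 := lt_of_lt_of_le ht (by nlinarith [min_le_right ε 1])
    have ht3 : t^3 ≤ t := by nlinarith [mul_pos htpos htpos]
    have hcU : c t ∈ U := by
      apply hball
      simp only [Metric.mem_ball, dist_zero_right]
      rw [pi_norm_lt_iff hε, Fin.forall_fin_two]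
      simp [hc, Real.norm_eq_abs, abs_lt, abs_of_pos htpos]
      constructor <;> nlinarith
    have hineqt := hineq (c t) hcU
    have hg : gradNorm F (c t) = 31/4 * t^6 := by
      rw [gradNorm_eval]
      have e1 : (3 * ((c t) 0)^2 + ((c t) 1)^6) = 31/4 * t^6 := by simp [hc]; ring
      have e2 : (6 * ((c t) 0) * ((c t) 1)^5 + 9 * ((c t) 1)^8) = 0 := by simp [hc]; ring
      rw [e1, e2, show (0:ℝ)^2 = 0 by ring, add_zero, Real.sqrt_sq (by positivity)]
    have hen : t ≤ eNorm (c t) := by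
      rw [eNorm_eval]
      apply Real.le_sqrt_of_sq_le
      have : ((c t) 0)^2 + ((c t) 1)^2 = (3/2 * t^3)^2 + t^2 := by simp [hc]; ring
      rw [this]
      nlinarith [sq_nonneg (3/2 * t^3)]
    have hrp : t ^ lam ≤ eNorm (c t) ^ lam :=
      Real.rpow_le_rpow htpos.le hen hlam.le
    have h6 : C * t ^ lam ≤ 31/4 * t ^ (6:ℝ) := by
      rw [hg] at hineqt
      rw [show (6:ℝ) = ((6:ℕ):ℝ) by norm_num, Real.rpow_natCast]
      calc C * t ^ lam ≤ C * eNorm (c t) ^ lam := mul_le_mul_of_nonneg_left hrp hC.le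
        _ ≤ 31/4 * t^(6:ℕ) := hineqt
    have hpow : t ^ (6:ℝ) = t ^ (6 - lam) * t ^ lam := by
      rw [← Real.rpow_add htpos]; ring_nf
    rw [hpow, ← mul_assoc] at h6
    exact le_of_mul_le_mul_right h6 (Real.rpow_pos_of_pos htpos lam)
  have htend : Tendsto (fun t : ℝ => 31/4 * t ^ (6 - lam)) (nhdsWithin 0 (Set.Ioi (0:ℝ))) (nhds 0) := by
    have h1 : Tendsto (fun t : ℝ => t ^ (6 - lam)) (nhds 0) (nhds ((0:ℝ) ^ (6 - lam))) :=
      (Real.continuousAt_rpow_const 0 (6 - lam) (Or.inr (by linarith))).tendsto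
    rw [Real.zero_rpow (by linarith : (6:ℝ) - lam ≠ 0)] at h1
    have h2 := (h1.const_mul (31/4 : ℝ)).mono_left
      (nhdsWithin_le_nhds (s := Set.Ioi (0:ℝ)))
    simpa using h2
  have : C ≤ 0 := ge_of_tendsto htend hkey
  linarith

theorem stmt13 :
    lojExp ((X 0) ^ 3 + X 0 * (X 1) ^ 6 + (X 1) ^ 9 : MvPolynomial (Fin 2) ℝ) = 6 := by
  have h6 : (6:ℝ) ∈ {lam : ℝ | 0 < lam ∧ LojIneq F lam} := ⟨by norm_num, six_mem⟩
  exact le_antisymm (csInf_le ⟨6, lower_bd⟩ h6) (le_csInf ⟨6, h6⟩ lower_bd)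
end

section
/- The polynomial f(x, y) = y(x⁵ + x y¹² + y¹⁵) (weighted homogeneous of type (16; 3, 1) with an isolated singularity at the origin) has Łojasiewicz exponent L(f) = 13. -/
open MvPolynomial

noncomputable def Fpoly : MvPolynomial (Fin 2) ℝ := X 1 * ((X 0) ^ 5 + X 0 * (X 1) ^ 12 + (X 1) ^ 15)

set_option maxHeartbeats 1000000

lemma pd0 (x : Fin 2 → ℝ) : eval x (pderiv 0 Fpoly) = 5*(x 0)^4*(x 1) + (x 1)^13 := by
  simp [Fpoly, pderiv_mul, pderiv_pow, pderiv_X]; ring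
lemma pd1 (x : Fin 2 → ℝ) : eval x (pderiv 1 Fpoly) = (x 0)^5 + 13*(x 0)*(x 1)^12 + 16*(x 1)^15 := by
  simp [Fpoly, pderiv_mul, pderiv_pow, pderiv_X]; ring

lemma mainIneq (a b : ℝ) (ha : |a| ≤ 1/2) (hb : |b| ≤ 1/2) :
    (1/2^16) * (a^2+b^2)^13 ≤ (5*a^4*b + b^13)^2 + (a^5 + 13*a*b^12 + 16*b^15)^2 := by
  rcases le_total (b^2) (a^2) with hba | hab
  · -- |b| ≤ |a|: f_y dominates
    have hb_le_a : |b| ≤ |a| := by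
      rw [← Real.sqrt_sq_eq_abs, ← Real.sqrt_sq_eq_abs]
      exact Real.sqrt_le_sqrt hba
    have h1 : |13*a*b^12 + 16*b^15| ≤ (1/2) * |a|^5 := by
      have e1 : |13*a*b^12| ≤ (13/256) * |a|^5 := by
        rw [abs_mul, abs_mul]
        have heq : |b|^12 = |b|^4 * |b|^8 := by ring
        have h4 : |b|^4 ≤ |a|^4 := pow_le_pow_left₀ (abs_nonneg _) hb_le_a 4
        have h8 : |b|^8 ≤ (1/2)^8 := pow_le_pow_left₀ (abs_nonneg _) hb 8
        have hab12 : |b^12| ≤ |a|^4 * (1/2)^8 := by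
          rw [abs_pow, heq]
          exact mul_le_mul h4 h8 (by positivity) (by positivity)
        have h13 : |(13:ℝ)| = 13 := by norm_num
        rw [h13]
        nlinarith [abs_nonneg a, abs_nonneg (b^12), pow_nonneg (abs_nonneg a) 4]
      have e2 : |16*b^15| ≤ (1/64) * |a|^5 := by
        rw [abs_mul]
        have h5 : |b|^5 ≤ |a|^5 := pow_le_pow_left₀ (abs_nonneg _) hb_le_a 5
        have h10 : |b|^10 ≤ (1/2)^10 := pow_le_pow_left₀ (abs_nonneg _) hb 10
        have heq : |b^15| = |b|^5 * |b|^10 := by rw [abs_pow]; ring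
        rw [heq]
        have h16 : |(16:ℝ)| = 16 := by norm_num
        rw [h16]
        nlinarith [pow_nonneg (abs_nonneg b) 5, pow_nonneg (abs_nonneg a) 5, pow_nonneg (abs_nonneg b) 10]
      calc |13*a*b^12 + 16*b^15| ≤ |13*a*b^12| + |16*b^15| := abs_add_le _ _
        _ ≤ (13/256)*|a|^5 + (1/64)*|a|^5 := add_le_add e1 e2
        _ ≤ (1/2) * |a|^5 := by nlinarith [pow_nonneg (abs_nonneg a) 5]
    have h2 : (1/2) * |a|^5 ≤ |a^5 + 13*a*b^12 + 16*b^15| := by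
      have heq : a^5 = (a^5 + 13*a*b^12 + 16*b^15) + (-(13*a*b^12 + 16*b^15)) := by ring
      have hsub : |a^5| ≤ |a^5 + 13*a*b^12 + 16*b^15| + |13*a*b^12 + 16*b^15| := by
        calc |a^5| = |(a^5 + 13*a*b^12 + 16*b^15) + (-(13*a*b^12 + 16*b^15))| := by rw [← heq]
          _ ≤ |a^5 + 13*a*b^12 + 16*b^15| + |-(13*a*b^12 + 16*b^15)| := abs_add_le _ _
          _ = |a^5 + 13*a*b^12 + 16*b^15| + |13*a*b^12 + 16*b^15| := by rw [abs_neg]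
      have ha5 : |a^5| = |a|^5 := abs_pow a 5
      linarith
    have h10eq : |a|^10 = a^10 := by
      rw [← abs_pow, abs_of_nonneg (by positivity)]
    have h3 : (a^5 + 13*a*b^12 + 16*b^15)^2 ≥ (1/4) * a^10 := by
      have hsq := mul_self_le_mul_self (by positivity : (0:ℝ) ≤ 1/2 * |a|^5) h2
      have habs := abs_mul_abs_self (a^5 + 13*a*b^12 + 16*b^15)
      nlinarith [h10eq]
    have ha1 : a^2 ≤ 1 := by
      nlinarith [sq_abs a, mul_nonneg (sub_nonneg.2 ha) (by positivity : (0:ℝ) ≤ 1/2 + |a|)]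
    have h4 : a^26 ≤ a^10 := by
      have hle1 : (a^2)^8 ≤ 1 := pow_le_one₀ (sq_nonneg a) ha1
      have key := mul_le_of_le_one_right (pow_nonneg (sq_nonneg a) 5) hle1
      nlinarith [key]
    have h5 : (a^2+b^2)^13 ≤ 2^13 * a^26 := by
      have hle : a^2 + b^2 ≤ 2 * a^2 := by linarith
      calc (a^2+b^2)^13 ≤ (2*a^2)^13 := pow_le_pow_left₀ (by positivity) hle 13
        _ = 2^13 * a^26 := by ring
    nlinarith [sq_nonneg (5*a^4*b + b^13)]
  · -- |a| ≤ |b|: f_x dominates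
    have h1 : (5*a^4*b + b^13)^2 ≥ b^26 := by
      have heq : (5*a^4*b + b^13)^2 = b^2 * (5*a^4 + b^12)^2 := by ring
      rw [heq]
      have hb12 : b^12 ≤ 5*a^4 + b^12 := by nlinarith [pow_nonneg (sq_nonneg a) 2]
      have h0 : (0:ℝ) ≤ b^12 := by positivity
      nlinarith [mul_le_mul_of_nonneg_left (mul_self_le_mul_self h0 hb12) (sq_nonneg b)]
    have h5 : (a^2+b^2)^13 ≤ 2^13 * b^26 := by
      have hle : a^2 + b^2 ≤ 2 * b^2 := by linarith
      calc (a^2+b^2)^13 ≤ (2*b^2)^13 := pow_le_pow_left₀ (by positivity) hle 13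
        _ = 2^13 * b^26 := by ring
    nlinarith [sq_nonneg (a^5 + 13*a*b^12 + 16*b^15)]

lemma loj13 : LojIneq Fpoly 13 := by
  refine ⟨1/2^8, by norm_num, Metric.ball 0 (1/2), Metric.ball_mem_nhds 0 (by norm_num), ?_⟩
  intro x hx
  have hxn : ‖x‖ < 1/2 := by simpa using mem_ball_zero_iff.mp hx
  have ha : |x 0| ≤ 1/2 := le_of_lt (lt_of_le_of_lt (norm_le_pi_norm x 0) hxn)
  have hb : |x 1| ≤ 1/2 := le_of_lt (lt_of_le_of_lt (norm_le_pi_norm x 1) hxn)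
  set a := x 0; set b := x 1
  have hsum : (∑ i, (x i)^2) = a^2 + b^2 := Fin.sum_univ_two _
  have hgs : (∑ i, (eval x (pderiv i Fpoly))^2) = (5*a^4*b + b^13)^2 + (a^5 + 13*a*b^12 + 16*b^15)^2 := by
    rw [Fin.sum_univ_two, pd0, pd1]
  have hen : eNorm x = Real.sqrt (a^2+b^2) := by rw [eNorm, hsum]
  have hrpow : eNorm x ^ (13:ℝ) = eNorm x ^ (13:ℕ) := by
    rw [← Real.rpow_natCast]; norm_num
  rw [gradNorm, hgs, hrpow, hen]
  have hs2 : Real.sqrt (a^2+b^2) ^ 2 = a^2+b^2 := Real.sq_sqrt (by positivity)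
  have key := mainIneq a b ha hb
  have hnn : (0:ℝ) ≤ 1/2^8 * Real.sqrt (a^2+b^2) ^ 13 := by positivity
  apply (Real.le_sqrt hnn (by positivity)).mpr
  have hexp : (1/2^8 * Real.sqrt (a^2+b^2) ^ 13)^2
      = 1/2^16 * ((Real.sqrt (a^2+b^2))^2)^13 := by ring
  rw [hexp, hs2]
  exact key

lemma lower (lam : ℝ) (hpos : 0 < lam) (hL : LojIneq Fpoly lam) : 13 ≤ lam := by
  by_contra hlt
  push_neg at hlt
  -- root u of 1 + 13 u^12 + 16 u^15 in (-1,0)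
  obtain ⟨u, hu_mem, hu⟩ : ∃ u ∈ Set.Ioo (-1:ℝ) 0, 1 + 13*u^12 + 16*u^15 = 0 := by
    have hcont : ContinuousOn (fun u : ℝ => 1 + 13*u^12 + 16*u^15) (Set.Icc (-1) 0) :=
      (Continuous.continuousOn (by continuity))
    have hsub := intermediate_value_Ioo (by norm_num : (-1:ℝ) ≤ 0) hcont
    have h0 : (0:ℝ) ∈ Set.Ioo ((fun u : ℝ => 1 + 13*u^12 + 16*u^15) (-1))
        ((fun u : ℝ => 1 + 13*u^12 + 16*u^15) 0) := by norm_num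
    obtain ⟨u, hu1, hu2⟩ := hsub h0
    exact ⟨u, hu1, hu2⟩
  obtain ⟨hu1, hu2⟩ := hu_mem
  have hune : u < 0 := hu2
  have hu12 : (0:ℝ) < 5 + u^12 := by positivity
  set c : ℝ := u * (5 + u^12) with hc
  have hcneg : c < 0 := mul_neg_of_neg_of_pos hune hu12
  obtain ⟨C, hC, U, hU, hIneq⟩ := hL
  obtain ⟨ε, hε, hball⟩ := Metric.mem_nhds_iff.mp hU
  -- the test curve
  set e : ℝ := 13 - lam with he
  have hepos : 0 < e := by simp [he]; linarith
  set K : ℝ := C * (-u)^lam / (-c) with hK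
  have hKpos : 0 < K := by
    apply div_pos (mul_pos hC (Real.rpow_pos_of_pos (by linarith) lam)) (by linarith)
  set M : ℝ := min (K ^ (1/e)) (min ε 1) with hM
  have hMpos : 0 < M := lt_min (Real.rpow_pos_of_pos hKpos _) (lt_min hε one_pos)
  set t : ℝ := M / 2 with ht
  have htpos : 0 < t := by positivity
  have htM : t < M := by rw [ht]; linarith
  have htK : t < K ^ (1/e) := lt_of_lt_of_le htM (min_le_left _ _)
  have htε : t < ε := lt_of_lt_of_le htM (le_trans (min_le_right _ _) (min_le_left _ _))
  have ht1 : t < 1 := lt_of_lt_of_le htM (le_trans (min_le_right _ _) (min_le_right _ _))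
  set p : Fin 2 → ℝ := ![t^3, u*t] with hp
  have hp0 : p 0 = t^3 := rfl
  have hp1 : p 1 = u*t := rfl
  have hpball : p ∈ Metric.ball (0 : Fin 2 → ℝ) ε := by
    rw [mem_ball_zero_iff]
    rw [pi_norm_lt_iff hε]
    intro i
    fin_cases i
    · show ‖t^3‖ < ε
      rw [Real.norm_eq_abs, abs_of_pos (by positivity)]
      have ht2 : t^2 < 1 := by nlinarith
      nlinarith
    · show ‖u*t‖ < ε
      rw [Real.norm_eq_abs, abs_mul, abs_of_pos htpos]
      have : |u| < 1 := by rw [abs_of_neg hune]; linarith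
      nlinarith
  have hkey := hIneq p (hball hpball)
  -- compute gradNorm
  have hg0 : eval p (pderiv 0 Fpoly) = c * t^13 := by
    rw [pd0, hp0, hp1, hc]; ring
  have hg1 : eval p (pderiv 1 Fpoly) = 0 := by
    rw [pd1, hp0, hp1]
    have : (t^3)^5 + 13*t^3*(u*t)^12 + 16*(u*t)^15 = t^15 * (1 + 13*u^12 + 16*u^15) := by ring
    rw [this, hu, mul_zero]
  have hgrad : gradNorm Fpoly p = -c * t^13 := by
    rw [gradNorm, Fin.sum_univ_two, hg0, hg1]
    rw [show (c*t^13)^2 + (0:ℝ)^2 = (c*t^13)^2 by ring, Real.sqrt_sq_eq_abs, abs_mul]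
    rw [abs_of_neg hcneg, abs_of_pos (by positivity : (0:ℝ) < t^13)]
  -- lower bound on eNorm
  have hen : -u * t ≤ eNorm p := by
    rw [eNorm, Fin.sum_univ_two, hp0, hp1]
    apply (Real.le_sqrt (by nlinarith) (by positivity)).mpr
    nlinarith [pow_pos htpos 6]
  have henp : (-u*t) ^ lam ≤ eNorm p ^ lam :=
    Real.rpow_le_rpow (by nlinarith) hen (le_of_lt hpos)
  have hmulr : (-u*t) ^ lam = (-u)^lam * t^lam :=
    Real.mul_rpow (by linarith) htpos.le
  have hstep : C * ((-u)^lam * t^lam) ≤ -c * t^13 := by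
    calc C * ((-u)^lam * t^lam) = C * (-u*t)^lam := by rw [hmulr]
      _ ≤ C * eNorm p ^ lam := by
          apply mul_le_mul_of_nonneg_left henp hC.le
      _ ≤ gradNorm Fpoly p := hkey
      _ = -c * t^13 := hgrad
  have ht13 : (t:ℝ)^(13:ℕ) = t^lam * t^e := by
    rw [← Real.rpow_natCast t 13, show ((13:ℕ):ℝ) = lam + e by rw [he]; push_cast; ring,
      Real.rpow_add htpos]
  have hdiv : C * (-u)^lam ≤ -c * t^e := by
    have h2 : C * (-u)^lam * t^lam ≤ (-c * t^e) * t^lam := by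
      calc C * (-u)^lam * t^lam = C * ((-u)^lam * t^lam) := by ring
        _ ≤ -c * t^13 := hstep
        _ = (-c * t^e) * t^lam := by rw [ht13]; ring
    exact le_of_mul_le_mul_right h2 (Real.rpow_pos_of_pos htpos lam)
  have hte : t^e < K := by
    have := Real.rpow_lt_rpow htpos.le htK hepos
    rwa [← Real.rpow_mul hKpos.le, one_div_mul_cancel (ne_of_gt hepos),
      Real.rpow_one] at this
  have hfin : -c * t^e < C * (-u)^lam := by
    have hcK : -c * K = C * (-u)^lam := by
      have hc0 : c ≠ 0 := ne_of_lt hcneg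
      rw [hK]
      field_simp
    calc -c * t^e < -c * K := by apply mul_lt_mul_of_pos_left hte (by linarith)
      _ = C * (-u)^lam := hcK
  linarith

theorem stmt15 :
    lojExp (X 1 * ((X 0) ^ 5 + X 0 * (X 1) ^ 12 + (X 1) ^ 15) : MvPolynomial (Fin 2) ℝ) = 13 := by
  show sInf {lam : ℝ | 0 < lam ∧ LojIneq Fpoly lam} = 13
  have hmem : (13:ℝ) ∈ {lam : ℝ | 0 < lam ∧ LojIneq Fpoly lam} := ⟨by norm_num, loj13⟩
  have hlb : ∀ lam ∈ {lam : ℝ | 0 < lam ∧ LojIneq Fpoly lam}, (13:ℝ) ≤ lam :=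
    fun lam hlam => lower lam hlam.1 hlam.2
  exact le_antisymm (csInf_le ⟨13, hlb⟩ hmem) (le_csInf ⟨13, hmem⟩ hlb)
end
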